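/- Let (X_k)_{k≥1} be i.i.d. random vectors in ℝ^d with ‖X_k‖ ≤ c almost surely and E[X_1X_1ᵀ] = Φ positive definite with λ_min(Φ) = a > 0; let α ∈ (0, 1/c²]. Define Γ_{m:k} = Π_{i=m}^{k}(I − αX_iX_iᵀ) (with Γ_{m:k} = I if m > k). Then for all 1 ≤ m ≤ k and all u ∈ ℝ^d, E[‖Γ_{m:k} u‖²] ≤ (1 − αa)^{k−m+1} ‖u‖². -/

import Mathlib

open MeasureTheory Matrix ProbabilityTheory

noncomputable def vnorm {d : ℕ} (v : Fin d → ℝ) : ℝ := Real.sqrt (∑ i, v i ^ 2)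

/-- The ordered product `Γ_{m:k} = (I − αX_kX_kᵀ)···(I − αX_mX_mᵀ)`, equal to `I` when
`m > k`. -/
noncomputable def prodGamma {d : ℕ} (α : ℝ) (Xs : ℕ → Fin d → ℝ) (m k : ℕ) :
    Matrix (Fin d) (Fin d) ℝ :=
  ((List.range (k + 1 - m)).map (fun j =>
      (1 : Matrix (Fin d) (Fin d) ℝ) - α • vecMulVec (Xs (k - j)) (Xs (k - j)))).prod

namespace Stmt9

variable {d : ℕ}

lemma vnorm_sq (v : Fin d → ℝ) : vnorm v ^ 2 = ∑ i, v i ^ 2 :=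
  Real.sq_sqrt (Finset.sum_nonneg fun _ _ => sq_nonneg _)

lemma sq_apply_le (v : Fin d → ℝ) (i : Fin d) : v i ^ 2 ≤ ∑ j, v j ^ 2 :=
  Finset.single_le_sum (f := fun j => v j ^ 2) (fun _ _ => sq_nonneg _) (Finset.mem_univ i)

lemma sumsq_le {c : ℝ} {v : Fin d → ℝ} (h : vnorm v ≤ c) :
    ∑ i, v i ^ 2 ≤ c ^ 2 := by
  rw [← vnorm_sq]
  exact pow_le_pow_left₀ (Real.sqrt_nonneg _) h 2

lemma matA_mulVec (α : ℝ) (X v : Fin d → ℝ) (i : Fin d) :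
    (((1 : Matrix (Fin d) (Fin d) ℝ) - α • vecMulVec X X).mulVec v) i
      = v i - α * (X ⬝ᵥ v) * X i := by
  have hent : ∀ x, ((1 : Matrix (Fin d) (Fin d) ℝ) - α • vecMulVec X X) i x
      = (if i = x then (1 : ℝ) else 0) - α * (X i * X x) := fun x => by
    simp [Matrix.sub_apply, Matrix.smul_apply, vecMulVec_apply, Matrix.one_apply]
  simp only [Matrix.mulVec, dotProduct, hent]
  simp only [sub_mul, Finset.sum_sub_distrib, ite_mul, one_mul, zero_mul,
    Finset.sum_ite_eq, Finset.mem_univ, if_true]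
  congr 1
  have h2 : ∑ x, α * (X i * X x) * v x = α * (∑ x, X x * v x) * X i := by
    rw [Finset.sum_congr rfl
      (fun x _ => (by ring : α * (X i * X x) * v x = (α * X i) * (X x * v x))),
      ← Finset.mul_sum]
    ring
  rw [h2]

lemma step_pointwise {c α : ℝ} (hα : 0 < α) (hαc : α * c ^ 2 ≤ 1)
    (X v : Fin d → ℝ) (hX : ∑ i, X i ^ 2 ≤ c ^ 2) :
    ∑ i, (((1 : Matrix (Fin d) (Fin d) ℝ) - α • vecMulVec X X).mulVec v) i ^ 2
      ≤ (∑ i, v i ^ 2) - α * (X ⬝ᵥ v) ^ 2 := by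
  have hexp : ∑ i, (((1 : Matrix (Fin d) (Fin d) ℝ) - α • vecMulVec X X).mulVec v) i ^ 2
      = (∑ i, v i ^ 2) - 2 * α * (X ⬝ᵥ v) ^ 2
          + α ^ 2 * (X ⬝ᵥ v) ^ 2 * ∑ i, X i ^ 2 := by
    simp only [matA_mulVec]
    have h1 : ∀ i : Fin d, (v i - α * (X ⬝ᵥ v) * X i) ^ 2
        = v i ^ 2 - 2 * α * (X ⬝ᵥ v) * (X i * v i) + α ^ 2 * (X ⬝ᵥ v) ^ 2 * X i ^ 2 :=
      fun i => by ring
    rw [Finset.sum_congr rfl fun i _ => h1 i]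
    rw [Finset.sum_add_distrib, Finset.sum_sub_distrib, ← Finset.mul_sum, ← Finset.mul_sum]
    have hd : (X ⬝ᵥ v) = ∑ i, X i * v i := rfl
    rw [← hd]
    ring
  rw [hexp]
  nlinarith [sq_nonneg (X ⬝ᵥ v), mul_nonneg (le_of_lt hα) (sq_nonneg (X ⬝ᵥ v)),
    mul_nonneg (mul_nonneg (le_of_lt hα) (le_of_lt hα)) (sq_nonneg (X ⬝ᵥ v))]

lemma prodGamma_eq_one (α : ℝ) (Xs : ℕ → Fin d → ℝ) {m k : ℕ} (h : k + 1 ≤ m) :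
    prodGamma α Xs m k = 1 := by
  unfold prodGamma
  rw [Nat.sub_eq_zero_of_le h]
  simp

lemma prodGamma_succ (α : ℝ) (Xs : ℕ → Fin d → ℝ) {m k : ℕ} (h : m ≤ k + 1) :
    prodGamma α Xs m (k + 1)
      = ((1 : Matrix (Fin d) (Fin d) ℝ) - α • vecMulVec (Xs (k + 1)) (Xs (k + 1)))
          * prodGamma α Xs m k := by
  unfold prodGamma
  have h1 : k + 1 + 1 - m = (k + 1 - m) + 1 := by omega
  rw [h1, List.range_succ_eq_map]
  simp only [List.map_cons, List.map_map, List.prod_cons, Nat.sub_zero]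
  congr 1
  exact congrArg List.prod (List.map_congr_left fun j hj => by
    simp only [Function.comp_apply, Nat.succ_sub_succ_eq_sub])

lemma prodGamma_congr (α : ℝ) {Xs Ys : ℕ → Fin d → ℝ} {m k : ℕ}
    (h : ∀ i, m ≤ i → i ≤ k → Xs i = Ys i) :
    prodGamma α Xs m k = prodGamma α Ys m k := by
  unfold prodGamma
  congr 1
  apply List.map_congr_left
  intro j hj
  rw [List.mem_range] at hj
  rw [h (k - j) (by omega) (by omega)]

variable {Ω' : Type*} [MeasurableSpace Ω']

lemma measurable_matA_entry {Y : Ω' → Fin d → ℝ} (hY : Measurable Y) (α : ℝ) (i j : Fin d) :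
    Measurable fun ω =>
      ((1 : Matrix (Fin d) (Fin d) ℝ) - α • vecMulVec (Y ω) (Y ω)) i j := by
  simp only [Matrix.sub_apply, Matrix.smul_apply, vecMulVec_apply, smul_eq_mul]
  exact measurable_const.sub
    (measurable_const.mul (((measurable_pi_apply i).comp hY).mul ((measurable_pi_apply j).comp hY)))

lemma measurable_prodGamma_entry (α : ℝ) {F : ℕ → Ω' → Fin d → ℝ}
    (hF : ∀ i, Measurable (F i)) (m k : ℕ) (i j : Fin d) :
    Measurable fun ω => prodGamma α (fun i => F i ω) m k i j := by
  induction k generalizing i j with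
  | zero =>
      rcases Nat.eq_zero_or_pos m with hm | hm
      · subst hm
        have he : ∀ ω : Ω', prodGamma α (fun i => F i ω) 0 0
            = (1 : Matrix (Fin d) (Fin d) ℝ) - α • vecMulVec (F 0 ω) (F 0 ω) := by
          intro ω; unfold prodGamma; simp
        simp only [he]
        exact measurable_matA_entry (hF 0) α i j
      · have he : ∀ ω : Ω', prodGamma α (fun i => F i ω) m 0
            = (1 : Matrix (Fin d) (Fin d) ℝ) := fun ω => prodGamma_eq_one α _ hm
        simp only [he]
        exact measurable_const
  | succ k ih =>
      by_cases h : m ≤ k + 1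
      · simp only [prodGamma_succ α _ h, Matrix.mul_apply]
        exact Finset.measurable_sum _ fun l _ =>
          (measurable_matA_entry (hF (k + 1)) α i l).mul (ih l j)
      · have he : ∀ ω : Ω', prodGamma α (fun i => F i ω) m (k + 1)
            = (1 : Matrix (Fin d) (Fin d) ℝ) := fun ω => prodGamma_eq_one α _ (by omega)
        simp only [he]
        exact measurable_const

lemma measurable_V (α : ℝ) {F : ℕ → Ω' → Fin d → ℝ}
    (hF : ∀ i, Measurable (F i)) (u : Fin d → ℝ) (m k : ℕ) :
    Measurable fun ω => (prodGamma α (fun i => F i ω) m k).mulVec u := by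
  apply measurable_pi_lambda; intro i
  simp only [Matrix.mulVec, dotProduct]
  exact Finset.measurable_sum _ fun j _ =>
    (measurable_prodGamma_entry α hF m k i j).mul measurable_const

end Stmt9

lemma Stmt9.abs_mul_le_of_sq {x y C : ℝ} (hx : x ^ 2 ≤ C) (hy : y ^ 2 ≤ C) (hC : 0 ≤ C) :
    |x * y| ≤ C := by
  rw [abs_mul]
  nlinarith [abs_nonneg x, abs_nonneg y, sq_abs x, sq_abs y, sq_nonneg (|x| - |y|)]


/-- For i.i.d. `X_k` with `‖X_k‖ ≤ c` a.s. and `E[X₁X₁ᵀ] = Φ` positive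
definite with `λ_min(Φ) = a > 0`, and `0 < α ≤ 1/c²`, we have for `1 ≤ m ≤ k`:
`E[‖Γ_{m:k}u‖²] ≤ (1−αa)^{k−m+1}‖u‖²`. -/
theorem stmt_9 {d : ℕ} (c a α : ℝ) (hc : 0 < c) (ha : 0 < a)
    (hα : 0 < α) (hα' : α ≤ 1 / c ^ 2)
    (Φ : Matrix (Fin d) (Fin d) ℝ) (hΦpd : Φ.PosDef)
    (hmin : ∀ u : Fin d → ℝ, a * vnorm u ^ 2 ≤ u ⬝ᵥ Φ.mulVec u)
    {Ω : Type*} [MeasurableSpace Ω] (μ : Measure Ω) [IsProbabilityMeasure μ]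
    (X : ℕ → Ω → Fin d → ℝ) (hXmeas : ∀ k, Measurable (X k))
    (hindep : iIndepFun X μ)
    (hident : ∀ k, IdentDistrib (X k) (X 1) μ μ)
    (hXbdd : ∀ k, ∀ᵐ ω ∂μ, vnorm (X k ω) ≤ c)
    (hXΦ : ∀ i j, ∫ ω, X 1 ω i * X 1 ω j ∂μ = Φ i j) :
    ∀ m k : ℕ, 1 ≤ m → m ≤ k → ∀ u : Fin d → ℝ,
      ∫ ω, vnorm ((prodGamma α (fun i => X i ω) m k).mulVec u) ^ 2 ∂μ
        ≤ (1 - α * a) ^ (k - m + 1) * vnorm u ^ 2 := by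
  intro m k hm hmk u
  rcases Nat.eq_zero_or_pos d with hd | hd
  · subst hd
    have h0 : ∀ w : Fin 0 → ℝ, vnorm w = 0 := fun w => by simp [vnorm]
    simp only [h0]
    simp
  have hc2 : (0:ℝ) < c ^ 2 := by positivity
  have hαc : α * c ^ 2 ≤ 1 := by
    rw [le_div_iff₀ hc2] at hα'; linarith
  set i0 : Fin d := ⟨0, hd⟩ with hi0
  have hC : (0:ℝ) ≤ ∑ i, u i ^ 2 := Finset.sum_nonneg fun _ _ => sq_nonneg _
  -- integrability of products of coordinates of X
  have hXint : ∀ n (i j : Fin d), Integrable (fun ω => X n ω i * X n ω j) μ := by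
    intro n i j
    apply Integrable.mono' (integrable_const (c ^ 2))
      ((((measurable_pi_apply i).comp (hXmeas n)).mul
        ((measurable_pi_apply j).comp (hXmeas n))).aestronglyMeasurable)
    filter_upwards [hXbdd n] with ω hω
    have h1 : X n ω i ^ 2 ≤ c ^ 2 := le_trans (Stmt9.sq_apply_le _ i) (Stmt9.sumsq_le hω)
    have h2 : X n ω j ^ 2 ≤ c ^ 2 := le_trans (Stmt9.sq_apply_le _ j) (Stmt9.sumsq_le hω)
    rw [Real.norm_eq_abs]
    exact Stmt9.abs_mul_le_of_sq h1 h2 hc2.le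
  -- second moments
  have hXij : ∀ n (i j : Fin d), ∫ ω, X n ω i * X n ω j ∂μ = Φ i j := by
    intro n i j
    rw [← hXΦ i j]
    have := ((hident n).comp
      (u := fun w : Fin d → ℝ => w i * w j)
      ((measurable_pi_apply i).mul (measurable_pi_apply j))).integral_eq
    simpa [Function.comp] using this
  -- a ≤ c ^ 2, hence 0 ≤ 1 - α a
  have hac : a ≤ c ^ 2 := by
    have he := hmin (Pi.single i0 (1:ℝ))
    have h1 : vnorm (Pi.single i0 (1:ℝ)) ^ 2 = 1 := by
      rw [Stmt9.vnorm_sq]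
      simp [Pi.single_apply]
    have h2 : (Pi.single i0 (1:ℝ)) ⬝ᵥ Φ.mulVec (Pi.single i0 1) = Φ i0 i0 := by
      rw [single_dotProduct, Matrix.mulVec_single]
      simp
    have h3 : Φ i0 i0 ≤ c ^ 2 := by
      rw [← hXij 1 i0 i0]
      have hle : ∫ ω, X 1 ω i0 * X 1 ω i0 ∂μ ≤ ∫ _ω, c ^ 2 ∂μ := by
        apply integral_mono_ae (hXint 1 i0 i0) (integrable_const _)
        filter_upwards [hXbdd 1] with ω hω
        have := le_trans (Stmt9.sq_apply_le (X 1 ω) i0) (Stmt9.sumsq_le hω)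
        nlinarith
      simpa using hle
    rw [h1, h2] at he
    linarith
  have h1a : (0:ℝ) ≤ 1 - α * a := by nlinarith [mul_le_mul_of_nonneg_left hac hα.le]
  -- the random vectors V n
  set V : ℕ → Ω → Fin d → ℝ :=
    fun n ω => (prodGamma α (fun i => X i ω) m n).mulVec u with hVdef
  have hVmeas : ∀ n, Measurable (V n) := by
    intro n; rw [hVdef]; exact Stmt9.measurable_V α hXmeas u m n
  have hVemeas : ∀ n (i : Fin d), Measurable fun ω => V n ω i :=
    fun n i => (measurable_pi_apply i).comp (hVmeas n)
  have hrec : ∀ n, m ≤ n + 1 → ∀ ω, V (n + 1) ω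
      = ((1 : Matrix (Fin d) (Fin d) ℝ)
          - α • vecMulVec (X (n+1) ω) (X (n+1) ω)).mulVec (V n ω) := by
    intro n hn ω
    simp only [hVdef]
    rw [Stmt9.prodGamma_succ α _ hn, ← Matrix.mulVec_mulVec]
  have hVconst : ∀ n, n + 1 ≤ m → ∀ ω, V n ω = u := by
    intro n hn ω
    simp only [hVdef]
    rw [Stmt9.prodGamma_eq_one α _ hn, Matrix.one_mulVec]
  have hVbdd : ∀ n, ∀ᵐ ω ∂μ, ∑ i, V n ω i ^ 2 ≤ ∑ i, u i ^ 2 := by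
    intro n
    induction n with
    | zero =>
        filter_upwards with ω
        rw [hVconst 0 hm ω]
    | succ n ih =>
        by_cases hn : m ≤ n + 1
        · filter_upwards [hXbdd (n+1), ih] with ω h1 h2
          rw [hrec n hn ω]
          have := Stmt9.step_pointwise hα hαc (X (n+1) ω) (V n ω) (Stmt9.sumsq_le h1)
          nlinarith [sq_nonneg (X (n+1) ω ⬝ᵥ V n ω), hα.le,
            mul_nonneg hα.le (sq_nonneg (X (n+1) ω ⬝ᵥ V n ω))]
        · filter_upwards with ω
          rw [hVconst (n+1) (by omega) ω]
  have hVint : ∀ n (i j : Fin d), Integrable (fun ω => V n ω i * V n ω j) μ := by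
    intro n i j
    apply Integrable.mono' (integrable_const (∑ i, u i ^ 2))
      (((hVemeas n i).mul (hVemeas n j)).aestronglyMeasurable)
    filter_upwards [hVbdd n] with ω hω
    have h1 : V n ω i ^ 2 ≤ ∑ i, u i ^ 2 := le_trans (Stmt9.sq_apply_le _ i) hω
    have h2 : V n ω j ^ 2 ≤ ∑ i, u i ^ 2 := le_trans (Stmt9.sq_apply_le _ j) hω
    rw [Real.norm_eq_abs]
    exact Stmt9.abs_mul_le_of_sq h1 h2 hC
  have int_sum : ∀ n, Integrable (fun ω => ∑ i, V n ω i ^ 2) μ := by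
    intro n
    apply integrable_finset_sum
    intro i _
    have := hVint n i i
    simpa [pow_two] using this
  -- independence of X (n+1) and V n
  have hIndep : ∀ n, IndepFun (X (n+1)) (V n) μ := by
    intro n
    have hdisj : Disjoint ({n+1} : Finset ℕ) (Finset.Ico m (n+1)) := by
      simp only [Finset.disjoint_left, Finset.mem_singleton, Finset.mem_Ico]
      omega
    have h0 := hindep.indepFun_finset {n+1} (Finset.Ico m (n+1)) hdisj hXmeas
    have hmem : (n+1 : ℕ) ∈ ({n+1} : Finset ℕ) := Finset.mem_singleton_self _
    have hψ : Measurable (fun g : (Finset.Ico m (n+1) : Finset ℕ) → Fin d → ℝ =>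
        (prodGamma α (fun i => if h : i ∈ Finset.Ico m (n+1) then g ⟨i, h⟩ else 0) m n).mulVec u) := by
      apply Stmt9.measurable_V α
        (F := fun (i : ℕ) (g : (Finset.Ico m (n+1) : Finset ℕ) → Fin d → ℝ) =>
          if h : i ∈ Finset.Ico m (n+1) then g ⟨i, h⟩ else 0)
      intro i
      by_cases h : i ∈ Finset.Ico m (n+1)
      · simp only [dif_pos h]
        exact measurable_pi_apply _
      · simp only [dif_neg h]
        exact measurable_const
    have hcomp := h0.comp
      (φ := fun g : ({n+1} : Finset ℕ) → Fin d → ℝ => g ⟨n+1, hmem⟩)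
      (ψ := fun g : (Finset.Ico m (n+1) : Finset ℕ) → Fin d → ℝ =>
        (prodGamma α (fun i => if h : i ∈ Finset.Ico m (n+1) then g ⟨i, h⟩ else 0) m n).mulVec u)
      (measurable_pi_apply _ : Measurable fun g : ({n+1} : Finset ℕ) → Fin d → ℝ => g ⟨n+1, hmem⟩) hψ
    have e1 : (fun g : ({n+1} : Finset ℕ) → Fin d → ℝ => g ⟨n+1, hmem⟩)
        ∘ (fun ω (i : ({n+1} : Finset ℕ)) => X i ω) = X (n+1) := rfl
    have e2 : (fun g : (Finset.Ico m (n+1) : Finset ℕ) → Fin d → ℝ =>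
          (prodGamma α (fun i => if h : i ∈ Finset.Ico m (n+1) then g ⟨i, h⟩ else 0) m n).mulVec u)
        ∘ (fun ω (i : (Finset.Ico m (n+1) : Finset ℕ)) => X i ω) = V n := by
      funext ω
      simp only [Function.comp_apply, hVdef]
      have hpg : prodGamma α (fun i => if h : i ∈ Finset.Ico m (n+1)
            then (fun (i : (Finset.Ico m (n+1) : Finset ℕ)) => X i ω) ⟨i, h⟩ else 0) m n
          = prodGamma α (fun i => X i ω) m n := by
        apply Stmt9.prodGamma_congr
        intro i hi1 hi2
        have hmem' : i ∈ Finset.Ico m (n+1) := by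
          rw [Finset.mem_Ico]; omega
        simp [hmem']
      rw [hpg]
    rw [e1, e2] at hcomp
    exact hcomp
  -- the contraction step
  have hkey : ∀ n, m ≤ n + 1 →
      ∫ ω, ∑ i, V (n+1) ω i ^ 2 ∂μ ≤ (1 - α * a) * ∫ ω, ∑ i, V n ω i ^ 2 ∂μ := by
    intro n hn
    have hprod_int : ∀ i j : Fin d,
        Integrable (fun ω => (X (n+1) ω i * X (n+1) ω j) * (V n ω i * V n ω j)) μ := by
      intro i j
      apply Integrable.mono' (integrable_const (c ^ 2 * ∑ i, u i ^ 2))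
        (((((measurable_pi_apply i).comp (hXmeas (n+1))).mul
            ((measurable_pi_apply j).comp (hXmeas (n+1)))).mul
          ((hVemeas n i).mul (hVemeas n j))).aestronglyMeasurable)
      filter_upwards [hXbdd (n+1), hVbdd n] with ω h1 h2
      have hx : |X (n+1) ω i * X (n+1) ω j| ≤ c ^ 2 :=
        Stmt9.abs_mul_le_of_sq (le_trans (Stmt9.sq_apply_le _ i) (Stmt9.sumsq_le h1))
          (le_trans (Stmt9.sq_apply_le _ j) (Stmt9.sumsq_le h1)) hc2.le
      have hv : |V n ω i * V n ω j| ≤ ∑ i, u i ^ 2 :=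
        Stmt9.abs_mul_le_of_sq (le_trans (Stmt9.sq_apply_le _ i) h2)
          (le_trans (Stmt9.sq_apply_le _ j) h2) hC
      show ‖X (n+1) ω i * X (n+1) ω j * (V n ω i * V n ω j)‖ ≤ _
      rw [Real.norm_eq_abs, abs_mul]
      exact mul_le_mul hx hv (abs_nonneg _) hc2.le
    have hexp_eq : ∀ ω, (X (n+1) ω ⬝ᵥ V n ω) ^ 2
        = ∑ i, ∑ j, (X (n+1) ω i * X (n+1) ω j) * (V n ω i * V n ω j) := by
      intro ω
      have hdp : X (n+1) ω ⬝ᵥ V n ω = ∑ i, X (n+1) ω i * V n ω i := rfl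
      rw [hdp, sq, Finset.sum_mul_sum]
      exact Finset.sum_congr rfl fun i _ => Finset.sum_congr rfl fun j _ => by ring
    have hsq_int : Integrable (fun ω => (X (n+1) ω ⬝ᵥ V n ω) ^ 2) μ := by
      simp only [hexp_eq]
      exact integrable_finset_sum _ fun i _ => integrable_finset_sum _ fun j _ => hprod_int i j
    have h3 : ∫ ω, (X (n+1) ω ⬝ᵥ V n ω) ^ 2 ∂μ
        = ∑ i, ∑ j, Φ i j * ∫ ω, V n ω i * V n ω j ∂μ := by
      simp only [hexp_eq]
      rw [integral_finset_sum _ fun i _ =>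
        integrable_finset_sum _ fun j _ => hprod_int i j]
      refine Finset.sum_congr rfl fun i _ => ?_
      rw [integral_finset_sum _ fun j _ => hprod_int i j]
      refine Finset.sum_congr rfl fun j _ => ?_
      have hind : IndepFun (fun ω => X (n+1) ω i * X (n+1) ω j)
          (fun ω => V n ω i * V n ω j) μ := by
        have := (hIndep n).comp
          (φ := fun w : Fin d → ℝ => w i * w j) (ψ := fun w : Fin d → ℝ => w i * w j)
          (by fun_prop)
          (by fun_prop)
        exact this
      have hmul := hind.integral_mul_eq_mul_integral (hXint (n+1) i j).aestronglyMeasurable (hVint n i j).aestronglyMeasurable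
      calc ∫ ω, (X (n+1) ω i * X (n+1) ω j) * (V n ω i * V n ω j) ∂μ
          = (∫ ω, X (n+1) ω i * X (n+1) ω j ∂μ) * ∫ ω, V n ω i * V n ω j ∂μ := by
            simpa [Pi.mul_apply] using hmul
        _ = Φ i j * ∫ ω, V n ω i * V n ω j ∂μ := by rw [hXij (n+1) i j]
    have e3 : ∀ w : Fin d → ℝ, w ⬝ᵥ Φ.mulVec w = ∑ i, ∑ j, Φ i j * (w i * w j) := by
      intro w
      have hdp : w ⬝ᵥ Φ.mulVec w = ∑ i, w i * ∑ j, Φ i j * w j := rfl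
      rw [hdp]
      refine Finset.sum_congr rfl fun i _ => ?_
      rw [Finset.mul_sum]
      exact Finset.sum_congr rfl fun j _ => by ring
    have hquad_int : Integrable (fun ω => ∑ i, ∑ j, Φ i j * (V n ω i * V n ω j)) μ :=
      integrable_finset_sum _ fun i _ => integrable_finset_sum _ fun j _ =>
        (hVint n i j).const_mul (Φ i j)
    have h4 : a * ∫ ω, ∑ i, V n ω i ^ 2 ∂μ
        ≤ ∑ i, ∑ j, Φ i j * ∫ ω, V n ω i * V n ω j ∂μ := by
      have e1 : ∑ i, ∑ j, Φ i j * ∫ ω, V n ω i * V n ω j ∂μ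
          = ∫ ω, ∑ i, ∑ j, Φ i j * (V n ω i * V n ω j) ∂μ := by
        rw [integral_finset_sum _ fun i _ => integrable_finset_sum _ fun j _ =>
          (hVint n i j).const_mul (Φ i j)]
        refine Finset.sum_congr rfl fun i _ => ?_
        rw [integral_finset_sum _ fun j _ => (hVint n i j).const_mul (Φ i j)]
        exact Finset.sum_congr rfl fun j _ => (integral_const_mul (Φ i j) _).symm
      rw [e1, ← integral_const_mul]
      apply integral_mono_ae ((int_sum n).const_mul a) hquad_int
      filter_upwards with ω
      have hm2 := hmin (V n ω)
      rw [Stmt9.vnorm_sq, e3 (V n ω)] at hm2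
      exact hm2
    have h1 : ∫ ω, ∑ i, V (n+1) ω i ^ 2 ∂μ
        ≤ ∫ ω, ((∑ i, V n ω i ^ 2) - α * (X (n+1) ω ⬝ᵥ V n ω) ^ 2) ∂μ := by
      apply integral_mono_ae (int_sum (n+1)) ((int_sum n).sub (hsq_int.const_mul α))
      filter_upwards [hXbdd (n+1)] with ω hω
      rw [hrec n hn ω]
      exact Stmt9.step_pointwise hα hαc (X (n+1) ω) (V n ω) (Stmt9.sumsq_le hω)
    have h2 : ∫ ω, ((∑ i, V n ω i ^ 2) - α * (X (n+1) ω ⬝ᵥ V n ω) ^ 2) ∂μ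
        = (∫ ω, ∑ i, V n ω i ^ 2 ∂μ) - α * ∫ ω, (X (n+1) ω ⬝ᵥ V n ω) ^ 2 ∂μ := by
      rw [integral_sub (int_sum n) (hsq_int.const_mul α), integral_const_mul]
    have h5 : a * ∫ ω, ∑ i, V n ω i ^ 2 ∂μ ≤ ∫ ω, (X (n+1) ω ⬝ᵥ V n ω) ^ 2 ∂μ := by
      rw [h3]; exact h4
    have h6 := mul_le_mul_of_nonneg_left h5 hα.le
    rw [h2] at h1
    nlinarith [h1, h6]
  -- the main induction
  have main : ∀ n : ℕ,
      ∫ ω, ∑ i, V (m - 1 + n) ω i ^ 2 ∂μ ≤ (1 - α * a) ^ n * ∑ i, u i ^ 2 := by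
    intro n
    induction n with
    | zero =>
        have he : (fun ω => ∑ i, V (m - 1 + 0) ω i ^ 2) = fun _ => ∑ i, u i ^ 2 := by
          funext ω
          rw [hVconst (m - 1 + 0) (by omega) ω]
        rw [he, integral_const]
        simp
    | succ n ih =>
        have hidx : m - 1 + (n + 1) = (m - 1 + n) + 1 := by omega
        have hmn : m ≤ (m - 1 + n) + 1 := by omega
        rw [hidx]
        calc ∫ ω, ∑ i, V ((m - 1 + n) + 1) ω i ^ 2 ∂μ
            ≤ (1 - α * a) * ∫ ω, ∑ i, V (m - 1 + n) ω i ^ 2 ∂μ := hkey _ hmn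
          _ ≤ (1 - α * a) * ((1 - α * a) ^ n * ∑ i, u i ^ 2) :=
              mul_le_mul_of_nonneg_left ih h1a
          _ = (1 - α * a) ^ (n + 1) * ∑ i, u i ^ 2 := by ring
  have hfin := main (k - m + 1)
  rw [show m - 1 + (k - m + 1) = k from by omega] at hfin
  simp only [Stmt9.vnorm_sq]
  simp only [hVdef] at hfin
  exact hfin
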